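/- Let (Gᵢ, pᵢ) be an inverse sequence of groups satisfying the Mittag-Leffler condition. Then the natural homomorphism lim Gᵢ → lim Gᵢᵃᵇ induced by the abelianization quotients Gᵢ → Gᵢᵃᵇ is surjective, and its kernel equals the topological closure of the commutator subgroup of lim Gᵢ, where lim Gᵢ carries the inverse limit topology induced from the discrete topologies on the Gᵢ. -/
import Mathlib


/-- An inverse sequence of groups `⋯ → G₂ → G₁ → G₀`, presented by its compatible
composite bonding homomorphisms `bond h : G j →* G i` for `i ≤ j`; the one-step
bonding maps `pᵢ` are `bond (Nat.le_succ i) : G (i+1) →* G i`. -/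
structure GroupInvSeq (G : ℕ → Type) [∀ i, Group (G i)] : Type where
  bond : ∀ ⦃i j : ℕ⦄, i ≤ j → (G j →* G i)
  bond_refl : ∀ i, bond (le_refl i) = MonoidHom.id (G i)
  bond_comp : ∀ ⦃i j k : ℕ⦄ (hij : i ≤ j) (hjk : j ≤ k),
    (bond hij).comp (bond hjk) = bond (hij.trans hjk)

/-- The Mittag-Leffler condition for an inverse sequence of groups. -/
def GroupInvSeq.MittagLeffler {G : ℕ → Type} [∀ i, Group (G i)]
    (S : GroupInvSeq G) : Prop :=
  ∀ i, ∃ j, ∃ hij : i < j, ∀ k, ∀ hjk : j < k,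
    Set.range (S.bond (hij.le.trans hjk.le)) = Set.range (S.bond hij.le)

/-- The inverse limit of a sequence of groups and bonding homomorphisms, as a
subgroup of the product: the group of threads. -/
def limSub {X : ℕ → Type} [∀ i, Group (X i)] (d : ∀ i, X (i + 1) →* X i) :
    Subgroup (∀ i, X i) where
  carrier := {g | ∀ i, d i (g (i + 1)) = g i}
  one_mem' := by intro i; simp
  mul_mem' := by
    intro a b ha hb i
    simp only [Pi.mul_apply, map_mul]
    rw [ha i, hb i]
  inv_mem' := by
    intro a ha i
    simp only [Pi.inv_apply, map_inv]
    rw [ha i]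

theorem mem_limSub {X : ℕ → Type} [∀ i, Group (X i)] {d : ∀ i, X (i + 1) →* X i}
    {g : ∀ i, X i} : g ∈ limSub d ↔ ∀ i, d i (g (i + 1)) = g i :=
  Iff.rfl

namespace MLAux

variable {G : ℕ → Type} [∀ i, Group (G i)]

theorem of_surj {H : Type} [Group H] :
    Function.Surjective (Abelianization.of : H →* Abelianization H) := fun y =>
  Quotient.inductionOn' y fun z => ⟨z, rfl⟩

theorem of_eq_one_iff {H : Type} [Group H] {x : H} :
    Abelianization.of x = 1 ↔ x ∈ commutator H :=
  QuotientGroup.eq_one_iff x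

theorem bond_bond (S : GroupInvSeq G) {i j k : ℕ} (hij : i ≤ j) (hjk : j ≤ k) (x : G k) :
    S.bond hij (S.bond hjk x) = S.bond (hij.trans hjk) x := by
  rw [← S.bond_comp hij hjk]; rfl

theorem thread_bond (S : GroupInvSeq G) {g : ∀ i, G i}
    (hg : g ∈ limSub fun i => S.bond (Nat.le_succ i)) :
    ∀ {j i : ℕ} (h : i ≤ j), S.bond h (g j) = g i := by
  intro j
  induction j with
  | zero =>
      intro i h
      obtain rfl : i = 0 := Nat.le_zero.mp h
      exact DFunLike.congr_fun (S.bond_refl 0) (g 0)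
  | succ j ih =>
      intro i h
      rcases Nat.lt_or_ge i (j+1) with hlt | hge
      · have hij : i ≤ j := Nat.lt_succ_iff.mp hlt
        have e1 : S.bond h (g (j+1)) =
            S.bond hij (S.bond (Nat.le_succ j) (g (j+1))) :=
          (bond_bond S hij (Nat.le_succ j) (g (j+1))).symm
        rw [e1, hg j, ih hij]
      · obtain rfl : i = j + 1 := le_antisymm h hge
        exact DFunLike.congr_fun (S.bond_refl (j+1)) (g (j+1))

variable (S : GroupInvSeq G) (hML : S.MittagLeffler)

noncomputable def m (i : ℕ) : ℕ := (hML i).choose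

theorem m_lt (i : ℕ) : i < m S hML i := (hML i).choose_spec.choose

noncomputable def Hsub (i : ℕ) : Subgroup (G i) := (S.bond (m_lt S hML i).le).range

theorem range_eq_H {i k : ℕ} (hk : m S hML i ≤ k) (h : i ≤ k) :
    (S.bond h).range = Hsub S hML i := by
  rcases eq_or_lt_of_le hk with heq | hlt
  · subst heq; rfl
  · have hs := (hML i).choose_spec.choose_spec k hlt
    exact SetLike.coe_injective hs

theorem mem_H_of_bond {i k : ℕ} (hk : m S hML i ≤ k) (h : i ≤ k) (x : G k) :
    S.bond h x ∈ Hsub S hML i :=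
  ⟨S.bond hk x, bond_bond S (m_lt S hML i).le hk x⟩

theorem bond_mem_H {i n : ℕ} (h : i ≤ n) {x : G n} (hx : x ∈ Hsub S hML n) :
    S.bond h x ∈ Hsub S hML i := by
  have hkn : m S hML n ≤ max (m S hML i) (m S hML n) := le_max_right _ _
  have hnk : n ≤ max (m S hML i) (m S hML n) := (m_lt S hML n).le.trans hkn
  rw [← range_eq_H S hML hkn hnk] at hx
  obtain ⟨y, rfl⟩ := hx
  rw [bond_bond S h hnk y]
  exact mem_H_of_bond S hML (le_max_left _ _) (h.trans hnk) y

theorem map_H_succ (i : ℕ) :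
    (Hsub S hML (i+1)).map (S.bond (Nat.le_succ i)) = Hsub S hML i := by
  have hk1 : m S hML i ≤ max (m S hML i) (m S hML (i+1)) := le_max_left _ _
  have hk2 : m S hML (i+1) ≤ max (m S hML i) (m S hML (i+1)) := le_max_right _ _
  have hi1k : i + 1 ≤ max (m S hML i) (m S hML (i+1)) := (m_lt S hML (i+1)).le.trans hk2
  have hik : i ≤ max (m S hML i) (m S hML (i+1)) := (Nat.le_succ i).trans hi1k
  rw [← range_eq_H S hML hk2 hi1k, ← range_eq_H S hML hk1 hik,
    ← MonoidHom.range_comp, S.bond_comp (Nat.le_succ i) hi1k]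

theorem map_commutator_bond {i j : ℕ} (hj : m S hML i ≤ j) (h : i ≤ j) :
    (commutator (G j)).map (S.bond h) = ⁅Hsub S hML i, Hsub S hML i⁆ := by
  rw [commutator, Subgroup.map_commutator, ← MonoidHom.range_eq_map, range_eq_H S hML hj h]

theorem map_commutator_H_succ (i : ℕ) :
    (⁅Hsub S hML (i+1), Hsub S hML (i+1)⁆).map (S.bond (Nat.le_succ i)) =
      ⁅Hsub S hML i, Hsub S hML i⁆ := by
  rw [Subgroup.map_commutator, map_H_succ]

theorem comm_le_H (i : ℕ) : ⁅Hsub S hML i, Hsub S hML i⁆ ≤ Hsub S hML i :=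
  Subgroup.commutator_le.mpr fun a ha b hb => by
    rw [commutatorElement_def]
    exact mul_mem (mul_mem (mul_mem ha hb) (inv_mem ha)) (inv_mem hb)

theorem exists_thread (n : ℕ) (x : G n) (hx : x ∈ Hsub S hML n) :
    ∃ g ∈ limSub (fun i => S.bond (Nat.le_succ i)), g n = x := by
  have step : ∀ i (y : G i), y ∈ Hsub S hML i →
      ∃ z, z ∈ Hsub S hML (i+1) ∧ S.bond (Nat.le_succ i) z = y := by
    intro i y hy
    rw [← map_H_succ S hML i] at hy
    obtain ⟨z, hz1, hz2⟩ := hy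
    exact ⟨z, hz1, hz2⟩
  let t : ∀ i, {y : G i // y ∈ Hsub S hML i} := fun i => Nat.rec
    ⟨S.bond (Nat.zero_le n) x, bond_mem_H S hML (Nat.zero_le n) hx⟩
    (fun i prev => if h : i + 1 ≤ n then ⟨S.bond h x, bond_mem_H S hML h hx⟩
      else ⟨(step i prev.1 prev.2).choose, (step i prev.1 prev.2).choose_spec.1⟩) i
  have t_succ : ∀ i, t (i+1) = if h : i + 1 ≤ n then ⟨S.bond h x, bond_mem_H S hML h hx⟩
      else ⟨(step i (t i).1 (t i).2).choose, (step i (t i).1 (t i).2).choose_spec.1⟩ :=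
    fun i => rfl
  have ht_le : ∀ i (h : i ≤ n), (t i).1 = S.bond h x := by
    intro i h
    cases i with
    | zero => rfl
    | succ i => rw [t_succ i, dif_pos h]
  have ht_rel : ∀ i, S.bond (Nat.le_succ i) ((t (i+1)).1) = (t i).1 := by
    intro i
    by_cases h : i + 1 ≤ n
    · have h' : i ≤ n := (Nat.le_succ i).trans h
      rw [ht_le (i+1) h, ht_le i h']
      exact bond_bond S (Nat.le_succ i) h x
    · rw [t_succ i, dif_neg h]
      exact (step i (t i).1 (t i).2).choose_spec.2
  refine ⟨fun i => (t i).1, ht_rel, ?_⟩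
  show (t n).1 = x
  rw [ht_le n le_rfl]
  exact DFunLike.congr_fun (S.bond_refl n) x

end MLAux

namespace MLAux

variable {G : ℕ → Type} [∀ i, Group (G i)] (S : GroupInvSeq G)

theorem ab_thread_bond {a : ∀ i, Abelianization (G i)}
    (ha : ∀ i, Abelianization.map (S.bond (Nat.le_succ i)) (a (i+1)) = a i) :
    ∀ {j i : ℕ} (h : i ≤ j), Abelianization.map (S.bond h) (a j) = a i := by
  intro j
  induction j with
  | zero =>
      intro i h
      obtain rfl : i = 0 := Nat.le_zero.mp h
      obtain ⟨y, hy⟩ := of_surj (a 0)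
      have e : S.bond h y = y := DFunLike.congr_fun (S.bond_refl 0) y
      rw [← hy, Abelianization.map_of, e]
  | succ j ih =>
      intro i h
      rcases Nat.lt_or_ge i (j+1) with hlt | hge
      · have hij : i ≤ j := Nat.lt_succ_iff.mp hlt
        obtain ⟨y, hy⟩ := of_surj (a (j+1))
        have e1 : Abelianization.map (S.bond h) (a (j+1)) =
            Abelianization.of (S.bond h y) := by rw [← hy, Abelianization.map_of]
        have e2 : Abelianization.of (S.bond h y) =
            Abelianization.map (S.bond hij) (a j) := by
          rw [← ha j, ← hy, Abelianization.map_of, Abelianization.map_of,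
            bond_bond S hij (Nat.le_succ j) y]
        rw [e1, e2, ih hij]
      · obtain rfl : i = j + 1 := le_antisymm h hge
        obtain ⟨y, hy⟩ := of_surj (a (j+1))
        have e : S.bond h y = y := DFunLike.congr_fun (S.bond_refl (j+1)) y
        rw [← hy, Abelianization.map_of, e]

theorem exists_thread_ab (hML : S.MittagLeffler) (a : ∀ i, Abelianization (G i))
    (ha : ∀ i, Abelianization.map (S.bond (Nat.le_succ i)) (a (i+1)) = a i) :
    ∃ g ∈ limSub (fun i => S.bond (Nat.le_succ i)), ∀ i, Abelianization.of (g i) = a i := by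
  classical
  set Pred : ∀ i, G i → Prop := fun i y =>
    y ∈ Hsub S hML i ∧ Abelianization.of y = a i ∧
      ∃ j, ∃ hj : m S hML i ≤ j, ∃ x : G j, Abelianization.of x = a j ∧
        y⁻¹ * S.bond ((m_lt S hML i).le.trans hj) x ∈ ⁅Hsub S hML i, Hsub S hML i⁆
    with hPred
  have base : ∃ y, Pred 0 y := by
    obtain ⟨x, hx⟩ := of_surj (a (m S hML 0))
    refine ⟨S.bond (m_lt S hML 0).le x,
      mem_H_of_bond S hML le_rfl (m_lt S hML 0).le x, ?_, m S hML 0, le_rfl, x, hx, ?_⟩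
    · rw [← Abelianization.map_of, hx]
      exact ab_thread_bond S ha (m_lt S hML 0).le
    · show (S.bond (m_lt S hML 0).le x)⁻¹ * S.bond (m_lt S hML 0).le x ∈ _
      rw [inv_mul_cancel]
      exact one_mem _
  have step : ∀ i (y : G i), Pred i y →
      ∃ z, Pred (i+1) z ∧ S.bond (Nat.le_succ i) z = y := by
    rintro i y ⟨hyH, hya, j, hj, x, hxa, hinv⟩
    set J := max (m S hML (i+1)) (max j (m S hML i)) with hJ
    have hJ1 : m S hML (i+1) ≤ J := le_max_left _ _
    have hJj : j ≤ J := (le_max_left j _).trans (le_max_right _ _)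
    have hJmi : m S hML i ≤ J := (le_max_right j _).trans (le_max_right _ _)
    have hij : i ≤ j := (m_lt S hML i).le.trans hj
    have hi1J : i + 1 ≤ J := (m_lt S hML (i+1)).le.trans hJ1
    have hiJ : i ≤ J := (Nat.le_succ i).trans hi1J
    obtain ⟨x', hx'⟩ := of_surj (a J)
    set u := S.bond hi1J x' with hu
    have huH : u ∈ Hsub S hML (i+1) := mem_H_of_bond S hML hJ1 hi1J x'
    have hua : Abelianization.of u = a (i+1) := by
      rw [hu, ← Abelianization.map_of, hx']
      exact ab_thread_bond S ha hi1J
    have hwK : x⁻¹ * S.bond hJj x' ∈ commutator (G j) := by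
      rw [← of_eq_one_iff, map_mul, map_inv, hxa, ← Abelianization.map_of, hx',
        ab_thread_bond S ha hJj, inv_mul_cancel]
    have hδ : y⁻¹ * S.bond hiJ x' ∈ ⁅Hsub S hML i, Hsub S hML i⁆ := by
      have e : y⁻¹ * S.bond hiJ x' =
          (y⁻¹ * S.bond hij x) * S.bond hij (x⁻¹ * S.bond hJj x') := by
        rw [map_mul, map_inv, bond_bond S hij hJj x']
        group
      rw [e]
      refine mul_mem hinv ?_
      rw [← map_commutator_bond S hML hj hij]
      exact Subgroup.mem_map_of_mem _ hwK
    have hδ' : (S.bond hiJ x')⁻¹ * y ∈ ⁅Hsub S hML i, Hsub S hML i⁆ := by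
      have h2 := inv_mem hδ
      rwa [mul_inv_rev, inv_inv] at h2
    rw [← map_commutator_H_succ S hML i] at hδ'
    obtain ⟨k', hk'C, hk'⟩ := hδ'
    have hk'K : Abelianization.of k' = 1 :=
      of_eq_one_iff.mpr (Subgroup.commutator_mono le_top le_top hk'C)
    refine ⟨u * k', ⟨mul_mem huH (comm_le_H S hML (i+1) hk'C), ?_, J, hJ1, x', hx', ?_⟩, ?_⟩
    · rw [map_mul, hua, hk'K, mul_one]
    · show (u * k')⁻¹ * u ∈ _
      have e : (u * k')⁻¹ * u = k'⁻¹ := by group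
      rw [e]
      exact inv_mem hk'C
    · rw [map_mul]
      have hpu : S.bond (Nat.le_succ i) u = S.bond hiJ x' :=
        bond_bond S (Nat.le_succ i) hi1J x'
      rw [hpu, hk', mul_inv_cancel_left]
  let t : ∀ i, {y : G i // Pred i y} := fun i => Nat.rec
    ⟨base.choose, base.choose_spec⟩
    (fun i prev => ⟨(step i prev.1 prev.2).choose, (step i prev.1 prev.2).choose_spec.1⟩) i
  refine ⟨fun i => (t i).1, fun i => ?_, fun i => (t i).2.2.1⟩
  exact (step i (t i).1 (t i).2).choose_spec.2

end MLAux

namespace MLAux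

variable {G : ℕ → Type} [∀ i, Group (G i)] (S : GroupInvSeq G)

theorem exists_commutator_approx (hML : S.MittagLeffler)
    {g : ∀ i, G i} (hg : g ∈ limSub fun i => S.bond (Nat.le_succ i))
    (hK : ∀ i, g i ∈ commutator (G i)) (n : ℕ) :
    ∃ h ∈ commutator ↥(limSub fun i => S.bond (Nat.le_succ i)),
      ∀ i ≤ n, ((h : ∀ i, G i) i = g i) := by
  have h1 : g n ∈ ⁅Hsub S hML n, Hsub S hML n⁆ := by
    rw [← map_commutator_bond S hML (le_refl (m S hML n)) (m_lt S hML n).le]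
    exact ⟨g (m S hML n), hK _, thread_bond S hg (m_lt S hML n).le⟩
  set L := limSub fun i => S.bond (Nat.le_succ i) with hL
  let π : ↥L →* G n := (Pi.evalMonoidHom G n).comp L.subtype
  have hrange : Hsub S hML n ≤ π.range := by
    intro x hx
    obtain ⟨g', hg', hgn⟩ := exists_thread S hML n x hx
    exact ⟨⟨g', hg'⟩, hgn⟩
  have h2 : ⁅Hsub S hML n, Hsub S hML n⁆ ≤ Subgroup.map π (commutator ↥L) := by
    rw [commutator, Subgroup.map_commutator, ← MonoidHom.range_eq_map]
    exact Subgroup.commutator_mono hrange hrange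
  obtain ⟨h, hmem, hn⟩ := h2 h1
  refine ⟨h, hmem, fun i hi => ?_⟩
  have e1 : (h : ∀ i, G i) i = S.bond hi ((h : ∀ i, G i) n) :=
    (thread_bond S h.2 hi).symm
  have e2 : (h : ∀ i, G i) n = g n := hn
  rw [e1, e2]
  exact thread_bond S hg hi

end MLAux


/-- The natural map `lim Gᵢ → lim Gᵢᵃᵇ` induced by the abelianization quotients
`Gᵢ → Gᵢᵃᵇ`. -/
def abelianizationLimMap {G : ℕ → Type} [∀ i, Group (G i)] (S : GroupInvSeq G) :
    ↥(limSub fun i => S.bond (Nat.le_succ i)) →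
      ↥(limSub (X := fun i => Abelianization (G i))
        fun i => Abelianization.map (S.bond (Nat.le_succ i))) :=
  fun g => ⟨fun i => Abelianization.of (g.1 i), fun i => by
    rw [Abelianization.map_of, (mem_limSub.mp g.2) i]⟩

open MLAux in
/-- For a Mittag-Leffler inverse sequence of groups, the natural homomorphism
`lim Gᵢ → lim Gᵢᵃᵇ` is surjective, and its kernel is the topological closure of the
commutator subgroup of `lim Gᵢ` (in the inverse limit topology coming from the
discrete topologies on the `Gᵢ`). -/
theorem lim_abelianization_surjective_and_kernel
    {G : ℕ → Type} [∀ i, Group (G i)]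
    [∀ i, TopologicalSpace (G i)] [∀ i, DiscreteTopology (G i)]
    (S : GroupInvSeq G) (hML : S.MittagLeffler) :
    Function.Surjective (abelianizationLimMap S) ∧
    (abelianizationLimMap S) ⁻¹' {1} =
      closure ((commutator ↥(limSub fun i => S.bond (Nat.le_succ i))
        : Subgroup _) : Set _) := by
  constructor
  · rintro ⟨a, ha⟩
    obtain ⟨g, hg, hga⟩ := exists_thread_ab S hML a (mem_limSub.mp ha)
    exact ⟨⟨g, hg⟩, Subtype.ext (funext fun i => hga i)⟩
  · have hiff : ∀ h : ↥(limSub fun i => S.bond (Nat.le_succ i)),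
        abelianizationLimMap S h = 1 ↔ ∀ i, (h : ∀ i, G i) i ∈ commutator (G i) := by
      intro h
      constructor
      · intro h1 i
        have := congrFun (congrArg Subtype.val h1) i
        exact of_eq_one_iff.mp this
      · intro hc
        exact Subtype.ext (funext fun i => of_eq_one_iff.mpr (hc i))
    apply le_antisymm
    · -- ker ⊆ closure commutator
      intro g hg1
      have hgK : ∀ i, (g : ∀ i, G i) i ∈ commutator (G i) := (hiff g).mp hg1
      refine mem_closure_iff.mpr fun o ho hgo => ?_
      obtain ⟨O, hO, rfl⟩ := isOpen_induced_iff.mp ho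
      obtain ⟨I, u, hIu, hsub⟩ := isOpen_pi_iff.mp hO _ hgo
      obtain ⟨h, hhC, hhag⟩ :=
        exists_commutator_approx S hML g.2 hgK (I.sup id)
      refine ⟨h, ?_, hhC⟩
      apply hsub
      intro i hi
      rw [hhag i (Finset.le_sup (f := id) hi)]
      exact (hIu i hi).2
    · -- closure commutator ⊆ ker
      apply closure_minimal
      · intro h hh
        show abelianizationLimMap S h = 1
        refine Subtype.ext (funext fun i => ?_)
        have : (Abelianization.of.comp ((Pi.evalMonoidHom G i).comp
            (limSub fun i => S.bond (Nat.le_succ i)).subtype)) h = 1 :=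
          Abelianization.commutator_subset_ker _ hh
        exact this
      · have : (abelianizationLimMap S) ⁻¹' {1} =
            ⋂ i, (fun h : ↥(limSub fun i => S.bond (Nat.le_succ i)) =>
              (h : ∀ i, G i) i) ⁻¹' ((commutator (G i) : Subgroup (G i)) : Set (G i)) := by
          ext h
          simp only [Set.mem_preimage, Set.mem_singleton_iff, Set.mem_iInter, SetLike.mem_coe]
          exact hiff h
        rw [this]
        exact isClosed_iInter fun i =>
          (isClosed_discrete _).preimage ((continuous_apply i).comp continuous_subtype_val)
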